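/- arXiv:2605.17051 — 4 statements merged into one kernel-verified Lean document; each statement's English description precedes it below -/
import Mathlib

section
/- For every number of nodes n ≥ 3, every initial center c₀, and every finite request sequence σ, the deterministic online algorithm PivotTracking satisfies ALG(σ) ≤ (3/2)·OPT(σ). -/
/-!
Online graph embedding in a star host graph.

Nodes are elements of a finite type `V`.  A configuration is determined by the
single node at the center.  A request is an (ordered representation of an)
unordered pair of distinct nodes `r = (r.1, r.2)`; serving it with center `c`
costs `1` if `c ∈ {r.1, r.2}` and `2` otherwise; changing the center costs `1`.
-/

/-- Cost of serving request `r` when node `c` is at the center of the star. -/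
def serveCost {V : Type*} [DecidableEq V] (c : V) (r : V × V) : ℕ :=
  if c = r.1 ∨ c = r.2 then 1 else 2

/-- Total cost of the schedule `cs` (the sequence of centers, one per request)
on request sequence `σ`, starting from initial center `c₀`:
`Σᵢ ([cᵢ ≠ cᵢ₋₁] + serveCost cᵢ σᵢ)`. -/
def schedCost {V : Type*} [DecidableEq V] (c₀ : V) : List (V × V) → List V → ℕ
  | [], _ => 0
  | _ :: _, [] => 0
  | r :: σ, c :: cs => (if c = c₀ then 0 else 1) + serveCost c r + schedCost c σ cs

/-- `OPT c₀ σ` : minimum cost over all (offline) schedules for `σ`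
starting with center `c₀`. -/
noncomputable def OPT {V : Type*} [DecidableEq V] (c₀ : V) (σ : List (V × V)) : ℕ :=
  sInf {k | ∃ cs : List V, cs.length = σ.length ∧ schedCost c₀ σ cs = k}

/-- One step of the deterministic algorithm PivotTracking.  The state is a pair
(current center, candidate set `C`).  On request `r`: if `C ∩ {r.1, r.2} ≠ ∅`
(intersection behavior), set `C ← C ∩ {r.1, r.2}` and, if the current center is
not in the new `C`, migrate an element of the new `C` to the center (when both
endpoints remain, the tie is broken by the fixed rule `tb`); otherwise (union
behavior), set `C ← C ∪ {r.1, r.2}` and do not migrate. -/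
def ptStep {V : Type*} [DecidableEq V] (tb : V → V → V) (st : V × Finset V)
    (r : V × V) : V × Finset V :=
  if (st.2 ∩ {r.1, r.2}).Nonempty then
    let C' := st.2 ∩ {r.1, r.2}
    (if st.1 ∈ C' then st.1
     else if C' = {r.1, r.2} then tb r.1 r.2
     else if r.1 ∈ C' then r.1 else r.2, C')
  else (st.1, st.2 ∪ {r.1, r.2})

/-- Total cost (migrations plus serving costs) paid by PivotTracking, started
in state `st`, on the request list `σ`. -/
def ptCost {V : Type*} [DecidableEq V] (tb : V → V → V) :
    V × Finset V → List (V × V) → ℕ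
  | _, [] => 0
  | st, r :: σ =>
    (if (ptStep tb st r).1 = st.1 then 0 else 1) + serveCost (ptStep tb st r).1 r
      + ptCost tb (ptStep tb st r) σ

def psi {V : Type*} [DecidableEq V] (C : Finset V) (c : V) : ℕ :=
  if c ∈ C then min (C.card - 1) 2 else 3 + min (C.card - 1) 1

lemma psi_lipschitz {V : Type*} [DecidableEq V] (C : Finset V) (c c' : V) :
    psi C c ≤ 3 * (if c = c' then 0 else 1) + psi C c' := by
  by_cases h : c = c'
  · simp [h]
  · simp only [if_neg h, psi]
    split <;> split <;> omega

lemma step_key {V : Type*} [DecidableEq V] (tb : V → V → V)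
    (htb : ∀ u v : V, tb u v = u ∨ tb u v = v)
    (a : V) (C : Finset V) (ha : a ∈ C) (r : V × V) (hr : r.1 ≠ r.2) (c : V) :
    2 * ((if (ptStep tb (a, C) r).1 = a then 0 else 1)
      + serveCost (ptStep tb (a, C) r).1 r)
      + psi (ptStep tb (a, C) r).2 c
    ≤ 3 * serveCost c r + psi C c := by
  obtain ⟨u, v⟩ := r
  simp only at hr
  have hC1 : 1 ≤ C.card := Finset.card_pos.mpr ⟨a, ha⟩
  by_cases hS : (C ∩ ({u, v} : Finset V)).Nonempty
  · -- intersection case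
    set S : Finset V := C ∩ {u, v} with hSdef
    set aX : V := if a ∈ S then a else if S = {u, v} then tb u v
      else if u ∈ S then u else v with haXdef
    have hstep : ptStep tb (a, C) (u, v) = (aX, S) := by
      simp only [ptStep, hSdef, haXdef]
      rw [if_pos hS]
    have hSsub : S ⊆ ({u, v} : Finset V) := Finset.inter_subset_right
    have hSsubC : S ⊆ C := Finset.inter_subset_left
    have haX : aX ∈ S := by
      rw [haXdef]
      by_cases h1 : a ∈ S
      · rwa [if_pos h1]
      · rw [if_neg h1]
        by_cases h2 : S = {u, v}
        · rw [if_pos h2, h2]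
          rcases htb u v with h | h <;> rw [h] <;> simp
        · rw [if_neg h2]
          by_cases h3 : u ∈ S
          · rwa [if_pos h3]
          · rw [if_neg h3]
            obtain ⟨w, hw⟩ := hS
            have hw' : w = u ∨ w = v := by simpa using hSsub hw
            rcases hw' with h | h
            · exact absurd (h ▸ hw) h3
            · exact h ▸ hw
    have haXuv : aX = u ∨ aX = v := by
      have := hSsub haX; simpa [Finset.mem_insert] using this
    have hserveX : serveCost aX (u, v) = 1 := by simp [serveCost, haXuv]
    have hS2 : S.card ≤ 2 := by
      calc S.card ≤ ({u, v} : Finset V).card := Finset.card_le_card hSsub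
        _ ≤ 2 := Finset.card_insert_le _ _ |>.trans (by simp)
    have hS1 : 1 ≤ S.card := Finset.card_pos.mpr hS
    have hSC : S.card ≤ C.card := Finset.card_le_card hSsubC
    rw [hstep]
    simp only [hserveX]
    by_cases haS : a ∈ S
    · -- no migration
      have haXa : aX = a := by simp [haXdef, haS]
      rw [haXa, if_pos rfl]
      by_cases hc : c = u ∨ c = v
      · have hserve : serveCost c (u, v) = 1 := by simp [serveCost, hc]
        rw [hserve]
        have hcm : c ∈ S ↔ c ∈ C := by
          constructor
          · exact fun h => hSsubC h
          · intro h
            exact Finset.mem_inter.mpr ⟨h, by simpa [Finset.mem_insert] using hc⟩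
        simp only [psi]
        by_cases hcC : c ∈ C
        · rw [if_pos (hcm.mpr hcC), if_pos hcC]; omega
        · rw [if_neg (fun h => hcC (hcm.mp h)), if_neg hcC]; omega
      · have hserve : serveCost c (u, v) = 2 := by simp [serveCost, hc]
        rw [hserve]
        simp only [psi]
        split <;> split <;> omega
    · -- migration
      have haXne : ¬ (aX = a) := fun h => haS (h ▸ haX)
      rw [if_neg haXne]
      have hCS1 : S.card + 1 ≤ C.card := by
        have : insert a S ⊆ C := by
          intro x hx
          rcases Finset.mem_insert.mp hx with h | h
          · exact h ▸ ha
          · exact hSsubC h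
        calc S.card + 1 = (insert a S).card := (Finset.card_insert_of_notMem haS).symm
          _ ≤ C.card := Finset.card_le_card this
      by_cases hc : c = u ∨ c = v
      · have hserve : serveCost c (u, v) = 1 := by simp [serveCost, hc]
        rw [hserve]
        by_cases hcC : c ∈ C
        · have hcS : c ∈ S :=
            Finset.mem_inter.mpr ⟨hcC, by simpa [Finset.mem_insert] using hc⟩
          simp only [psi, if_pos hcS, if_pos hcC]
          omega
        · have hcS : c ∉ S := fun h => hcC (hSsubC h)
          -- S ⊆ {u,v} \ {c}, so S.card ≤ 1
          have hScard1 : S.card ≤ 1 := by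
            have hsub : S ⊆ {u, v} \ {c} := by
              intro x hx
              exact Finset.mem_sdiff.mpr ⟨hSsub hx, by
                simp only [Finset.mem_singleton]
                rintro rfl; exact hcS hx⟩
            calc S.card ≤ (({u, v} : Finset V) \ {c}).card := Finset.card_le_card hsub
              _ ≤ 1 := by
                  rcases hc with rfl | rfl
                  · have : ({c, v} : Finset V) \ {c} ⊆ {v} := by
                      intro x hx
                      rcases Finset.mem_sdiff.mp hx with ⟨h1, h2⟩
                      simp only [Finset.mem_insert, Finset.mem_singleton] at h1 h2 ⊢
                      tauto
                    simpa using Finset.card_le_card this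
                  · have : ({u, c} : Finset V) \ {c} ⊆ {u} := by
                      intro x hx
                      rcases Finset.mem_sdiff.mp hx with ⟨h1, h2⟩
                      simp only [Finset.mem_insert, Finset.mem_singleton] at h1 h2 ⊢
                      tauto
                    simpa using Finset.card_le_card this
          simp only [psi, if_neg hcS, if_neg hcC]
          omega
      · have hserve : serveCost c (u, v) = 2 := by simp [serveCost, hc]
        rw [hserve]
        have hcS : c ∉ S := by
          intro h
          have := hSsub h
          simp only [Finset.mem_insert, Finset.mem_singleton] at this
          exact hc this
        simp only [psi, if_neg hcS]
        split <;> omega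
  · -- union case
    have hstep : ptStep tb (a, C) (u, v) = (a, C ∪ {u, v}) := by
      simp only [ptStep]
      rw [if_neg hS]
    have hauv : ¬ (a = u ∨ a = v) := by
      intro h
      exact hS ⟨a, Finset.mem_inter.mpr ⟨ha, by simpa [Finset.mem_insert] using h⟩⟩
    have hserveA : serveCost a (u, v) = 2 := by simp [serveCost, hauv]
    rw [hstep]
    simp only [hserveA, eq_self_iff_true, if_true]
    have hdisj : Disjoint C ({u, v} : Finset V) := by
      rw [Finset.disjoint_iff_inter_eq_empty]
      exact Finset.not_nonempty_iff_eq_empty.mp hS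
    have hcard : (C ∪ ({u, v} : Finset V)).card = C.card + 2 := by
      rw [Finset.card_union_of_disjoint hdisj, Finset.card_insert_of_notMem (by simpa using hr),
        Finset.card_singleton]
    by_cases hc : c = u ∨ c = v
    · have hserve : serveCost c (u, v) = 1 := by simp [serveCost, hc]
      have hcC : c ∉ C := by
        intro h
        exact hS ⟨c, Finset.mem_inter.mpr ⟨h, by simpa [Finset.mem_insert] using hc⟩⟩
      have hcU : c ∈ C ∪ ({u, v} : Finset V) := by
        apply Finset.mem_union_right
        simpa [Finset.mem_insert] using hc
      rw [hserve]
      simp only [psi, if_pos hcU, if_neg hcC, hcard]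
      omega
    · have hserve : serveCost c (u, v) = 2 := by simp [serveCost, hc]
      rw [hserve]
      have hcU : c ∈ C ∪ ({u, v} : Finset V) ↔ c ∈ C := by
        simp only [Finset.mem_union, Finset.mem_insert, Finset.mem_singleton]
        tauto
      simp only [psi, hcard]
      by_cases hcC : c ∈ C
      · rw [if_pos (hcU.mpr hcC), if_pos hcC]; omega
      · rw [if_neg (fun h => hcC (hcU.mp h)), if_neg hcC]; omega

lemma ptStep_mem {V : Type*} [DecidableEq V] (tb : V → V → V)
    (htb : ∀ u v : V, tb u v = u ∨ tb u v = v)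
    (a : V) (C : Finset V) (ha : a ∈ C) (r : V × V) :
    (ptStep tb (a, C) r).1 ∈ (ptStep tb (a, C) r).2 := by
  obtain ⟨u, v⟩ := r
  by_cases hS : (C ∩ ({u, v} : Finset V)).Nonempty
  · simp only [ptStep]
    rw [if_pos hS]
    dsimp only
    by_cases h1 : a ∈ C ∩ ({u, v} : Finset V)
    · rwa [if_pos h1]
    · rw [if_neg h1]
      by_cases h2 : C ∩ ({u, v} : Finset V) = {u, v}
      · rw [if_pos h2, h2]
        rcases htb u v with h | h <;> rw [h] <;> simp
      · rw [if_neg h2]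
        by_cases h3 : u ∈ C ∩ ({u, v} : Finset V)
        · rwa [if_pos h3]
        · rw [if_neg h3]
          obtain ⟨w, hw⟩ := hS
          have hw' : w = u ∨ w = v := by
            have := Finset.mem_of_mem_inter_right hw
            simpa using this
          rcases hw' with h | h
          · exact absurd (h ▸ hw) h3
          · exact h ▸ hw
  · simp only [ptStep]
    rw [if_neg hS]
    exact Finset.mem_union_left _ ha

lemma main_ind {V : Type*} [DecidableEq V] (tb : V → V → V)
    (htb : ∀ u v : V, tb u v = u ∨ tb u v = v) (σ : List (V × V)) :
    ∀ cs : List V, cs.length = σ.length → (∀ r ∈ σ, r.1 ≠ r.2) →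
    ∀ (a : V) (C : Finset V), a ∈ C → ∀ c' : V,
    2 * ptCost tb (a, C) σ ≤ 3 * schedCost c' σ cs + psi C c' := by
  induction σ with
  | nil => intro cs _ _ a C _ c'; simp [ptCost]
  | cons r σ ih =>
    intro cs hlen hσ a C ha c'
    cases cs with
    | nil => simp at hlen
    | cons c cs =>
      simp only [List.length_cons, Nat.succ.injEq] at hlen
      have hmem := ptStep_mem tb htb a C ha r
      have h1 := ih cs hlen (fun r' h => hσ r' (List.mem_cons_of_mem _ h))
        (ptStep tb (a, C) r).1 (ptStep tb (a, C) r).2 hmem c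
      rw [Prod.mk.eta] at h1
      have h2 := step_key tb htb a C ha r (hσ r (List.mem_cons_self)) c
      have h3 := psi_lipschitz C c c'
      rw [ptCost, schedCost]
      dsimp only
      omega

/-- For every number of nodes `n ≥ 3`, every initial center
`c₀` and every finite request sequence `σ` (of unordered pairs of distinct
nodes), the deterministic online algorithm PivotTracking (with any fixed
tie-breaking rule) satisfies `ALG(σ) ≤ (3/2) · OPT(σ)`. -/
theorem pivotTracking_three_halves_competitive
    {V : Type*} [DecidableEq V] [Fintype V] (hn : 3 ≤ Fintype.card V)
    (c₀ : V) (σ : List (V × V)) (hσ : ∀ r ∈ σ, r.1 ≠ r.2)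
    (tb : V → V → V) (htb : ∀ u v : V, tb u v = u ∨ tb u v = v) :
    (ptCost tb (c₀, {c₀}) σ : ℚ) ≤ (3 / 2) * (OPT c₀ σ : ℚ) := by
  have hne : {k | ∃ cs : List V, cs.length = σ.length ∧ schedCost c₀ σ cs = k}.Nonempty :=
    ⟨schedCost c₀ σ (List.replicate σ.length c₀),
      List.replicate σ.length c₀, by simp, rfl⟩
  obtain ⟨cs, hlen, hcost⟩ := Nat.sInf_mem hne
  have h := main_ind tb htb σ cs hlen hσ c₀ {c₀} (Finset.mem_singleton_self c₀) c₀
  have hpsi : psi ({c₀} : Finset V) c₀ = 0 := by simp [psi]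
  rw [hpsi, hcost] at h
  have h' : (2 : ℚ) * ptCost tb (c₀, {c₀}) σ ≤ 3 * OPT c₀ σ := by
    rw [OPT]
    exact_mod_cast h
  linarith
end

section
/- On the star with exactly n = 3 nodes: for every deterministic online algorithm A and every real c < 3/2, there exists a finite request sequence σ with A(σ) ≥ c·OPT(σ). Hence no deterministic online algorithm is c-competitive for any c < 3/2. -/
/-- The schedule produced by the deterministic online algorithm `A`
(which maps the initial center and the revealed prefix `σ₁, …, σᵢ` to the
center `cᵢ` used to serve `σᵢ`). -/
def onlineSched {V : Type*} (A : V → List (V × V) → V) (c₀ : V)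
    (σ : List (V × V)) : List V :=
  (List.range σ.length).map fun i => A c₀ (σ.take (i + 1))

/-- Total cost of the deterministic online algorithm `A` on `σ`. -/
def onlineCost {V : Type*} [DecidableEq V] (A : V → List (V × V) → V) (c₀ : V)
    (σ : List (V × V)) : ℕ :=
  schedCost c₀ σ (onlineSched A c₀ σ)

section Adversary

variable {V : Type*} [DecidableEq V]

lemma one_le_serveCost (c : V) (r : V × V) : 1 ≤ serveCost c r := by
  unfold serveCost; split <;> omega

lemma schedCost_length_le (c₀ : V) : ∀ (σ : List (V × V)) (cs : List V),
    cs.length = σ.length → σ.length ≤ schedCost c₀ σ cs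
  | [], _, _ => by simp [schedCost]
  | r :: σ, [], h => by simp at h
  | r :: σ, d :: cs, h => by
    have h1 := schedCost_length_le d σ cs (by simpa using h)
    have h2 := one_le_serveCost d r
    simp only [schedCost, List.length_cons]
    omega

lemma schedCost_append (c₀ : V) : ∀ (σ₁ : List (V × V)) (cs₁ : List V),
    cs₁.length = σ₁.length → ∀ (σ₂ : List (V × V)) (cs₂ : List V),
    schedCost c₀ (σ₁ ++ σ₂) (cs₁ ++ cs₂)
      = schedCost c₀ σ₁ cs₁ + schedCost (cs₁.getLastD c₀) σ₂ cs₂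
  | [], [], _, σ₂, cs₂ => by simp [schedCost]
  | [], d :: cs, h, _, _ => by simp at h
  | r :: σ, [], h, _, _ => by simp at h
  | r :: σ, d :: cs, h, σ₂, cs₂ => by
    have ih := schedCost_append d σ cs (by simpa using h) σ₂ cs₂
    show (if d = c₀ then 0 else 1) + serveCost d r + schedCost d (σ ++ σ₂) (cs ++ cs₂)
      = ((if d = c₀ then 0 else 1) + serveCost d r + schedCost d σ cs)
        + schedCost ((d :: cs).getLastD c₀) σ₂ cs₂
    rw [ih, List.getLastD_cons]
    omega

/-- Center occupied after the online algorithm has served `σ`. -/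
def lastC (A : V → List (V × V) → V) (c₀ : V) (σ : List (V × V)) : V :=
  if σ.isEmpty then c₀ else A c₀ σ

/-- The adversarial request sequence: each request is the pair of nodes
avoiding the online algorithm's current center. -/
def adv (A : V → List (V × V) → V) (c₀ : V) (pn : V → V × V) : ℕ → List (V × V)
  | 0 => []
  | k + 1 => adv A c₀ pn k ++ [pn (lastC A c₀ (adv A c₀ pn k))]

/-- The sequence of excluded nodes. -/
def exL (A : V → List (V × V) → V) (c₀ : V) (pn : V → V × V) : ℕ → List V
  | 0 => []
  | k + 1 => exL A c₀ pn k ++ [lastC A c₀ (adv A c₀ pn k)]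

variable (A : V → List (V × V) → V) (c₀ : V) (pn : V → V × V)

lemma adv_eq_map : ∀ m, adv A c₀ pn m = (exL A c₀ pn m).map pn
  | 0 => rfl
  | m + 1 => by simp [adv, exL, adv_eq_map m]

lemma length_exL : ∀ m, (exL A c₀ pn m).length = m
  | 0 => rfl
  | m + 1 => by simp [exL, length_exL m]

lemma length_adv (m : ℕ) : (adv A c₀ pn m).length = m := by
  simp [adv_eq_map, length_exL]

lemma length_onlineSched (σ : List (V × V)) :
    (onlineSched A c₀ σ).length = σ.length := by simp [onlineSched]

lemma onlineSched_concat (σ : List (V × V)) (r : V × V) :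
    onlineSched A c₀ (σ ++ [r]) = onlineSched A c₀ σ ++ [A c₀ (σ ++ [r])] := by
  unfold onlineSched
  rw [List.length_append, List.length_singleton, List.range_succ, List.map_append]
  congr 1
  · apply List.map_congr_left
    intro i hi
    rw [List.mem_range] at hi
    rw [List.take_append_of_le_length (by omega)]
  · simp only [List.map_singleton]
    rw [List.take_of_length_le (by simp)]

lemma getLastD_onlineSched_adv (m : ℕ) :
    (onlineSched A c₀ (adv A c₀ pn m)).getLastD c₀ = lastC A c₀ (adv A c₀ pn m) := by
  cases m with
  | zero => rfl
  | succ k =>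
    rw [adv, onlineSched_concat, List.getLastD_concat]
    simp [lastC]

lemma online_lb (hpn : ∀ x, (pn x).1 ≠ x ∧ (pn x).2 ≠ x) :
    ∀ m, 2 * m ≤ onlineCost A c₀ (adv A c₀ pn m)
  | 0 => Nat.zero_le _
  | m + 1 => by
    have ih := online_lb hpn m
    set σ := adv A c₀ pn m with hσ
    set x := lastC A c₀ σ with hx
    set a := A c₀ (σ ++ [pn x]) with ha
    have hcost : onlineCost A c₀ (adv A c₀ pn (m + 1))
        = onlineCost A c₀ σ + schedCost x [pn x] [a] := by
      unfold onlineCost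
      rw [show adv A c₀ pn (m + 1) = σ ++ [pn x] from rfl, onlineSched_concat,
        schedCost_append c₀ σ _ (by rw [length_onlineSched]) [pn x] [A c₀ (σ ++ [pn x])],
        getLastD_onlineSched_adv]
    have hstep : 2 ≤ schedCost x [pn x] [a] := by
      simp only [schedCost]
      by_cases hax : a = x
      · have : serveCost a (pn x) = 2 := by
          unfold serveCost
          rw [if_neg]
          rintro (h | h)
          · exact (hpn x).1 (by rw [← h, hax])
          · exact (hpn x).2 (by rw [← h, hax])
        rw [this]
        omega
      · rw [if_neg hax]
        have := one_le_serveCost a (pn x)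
        omega
    omega

lemma schedCost_replicate_self (z : V) : ∀ σ : List (V × V),
    schedCost z σ (List.replicate σ.length z) = (σ.map (serveCost z)).sum
  | [] => rfl
  | r :: σ => by
    simp only [List.length_cons, List.replicate_succ, schedCost,
      List.map_cons, List.sum_cons, schedCost_replicate_self z σ, if_pos trivial,
      eq_self_iff_true, if_true]
    omega

lemma schedCost_replicate_le (z : V) (σ : List (V × V)) :
    schedCost c₀ σ (List.replicate σ.length z) ≤ 1 + (σ.map (serveCost z)).sum := by
  cases σ with
  | nil => simp [schedCost]
  | cons r σ =>
    simp only [List.length_cons, List.replicate_succ, schedCost,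
      List.map_cons, List.sum_cons, schedCost_replicate_self]
    have h1 : (if z = c₀ then 0 else 1) ≤ 1 := by split <;> omega
    omega

lemma sum_ite_count (z : V) : ∀ l : List V,
    (l.map (fun x => if z = x then 2 else 1)).sum = l.length + l.count z
  | [] => rfl
  | x :: l => by
    simp only [List.map_cons, List.sum_cons, List.count_cons, List.length_cons,
      sum_ite_count z l, beq_iff_eq]
    by_cases h : z = x
    · rw [if_pos h, if_pos h.symm]; omega
    · rw [if_neg h, if_neg (Ne.symm h)]; omega

lemma sum_count_univ [Fintype V] : ∀ l : List V, (∑ z : V, l.count z) = l.length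
  | [] => by simp
  | x :: l => by
    simp only [List.count_cons, List.length_cons, beq_iff_eq]
    rw [Finset.sum_add_distrib, sum_count_univ l]
    simp

lemma exists_small_count [Fintype V] (h3 : Fintype.card V = 3) (l : List V) :
    ∃ z : V, l.count z ≤ l.length / 3 := by
  by_contra h
  push_neg at h
  have hsum : (∑ z : V, l.count z) = l.length := sum_count_univ l
  have hlb : ∀ z : V, l.length / 3 + 1 ≤ l.count z := fun z => h z
  have : (∑ z : V, (l.length / 3 + 1)) ≤ ∑ z : V, l.count z :=
    Finset.sum_le_sum fun z _ => hlb z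
  rw [hsum, Finset.sum_const, Finset.card_univ, h3, smul_eq_mul] at this
  have := Nat.div_add_mod l.length 3
  have := Nat.mod_lt l.length (show 0 < 3 by norm_num)
  omega

lemma exists_pn [Fintype V] (h3 : Fintype.card V = 3) :
    ∃ pn : V → V × V, ∀ x : V, (pn x).1 ≠ (pn x).2 ∧ (pn x).1 ≠ x ∧ (pn x).2 ≠ x ∧
      ∀ y : V, y ≠ x → y = (pn x).1 ∨ y = (pn x).2 := by
  have hx : ∀ x : V, ∃ p : V × V, p.1 ≠ p.2 ∧ p.1 ≠ x ∧ p.2 ≠ x ∧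
      ∀ y : V, y ≠ x → y = p.1 ∨ y = p.2 := by
    intro x
    have hcard : (Finset.univ.erase x).card = 2 := by
      rw [Finset.card_erase_of_mem (Finset.mem_univ x), Finset.card_univ, h3]
    obtain ⟨u, v, huv, huvs⟩ := Finset.card_eq_two.mp hcard
    have hu : u ∈ Finset.univ.erase x := by rw [huvs]; simp
    have hv : v ∈ Finset.univ.erase x := by rw [huvs]; simp
    refine ⟨(u, v), huv, (Finset.mem_erase.mp hu).1, (Finset.mem_erase.mp hv).1, ?_⟩
    intro y hy
    have : y ∈ Finset.univ.erase x := Finset.mem_erase.mpr ⟨hy, Finset.mem_univ y⟩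
    rw [huvs] at this
    simpa using this
  exact ⟨fun x => (hx x).choose, fun x => (hx x).choose_spec⟩

end Adversary

/-- On the star with exactly `n = 3` nodes: for every
deterministic online algorithm `A` and every real `c < 3/2`, there exists a
finite request sequence `σ` (of unordered pairs of distinct nodes, with
`OPT(σ) > 0`) such that `A(σ) ≥ c · OPT(σ)`.  Hence no deterministic online
algorithm is `c`-competitive for any `c < 3/2`. -/
theorem no_deterministic_better_than_three_halves
    {V : Type*} [DecidableEq V] [Fintype V] (h3 : Fintype.card V = 3)
    (A : V → List (V × V) → V) (c₀ : V) (c : ℝ) (hc : c < 3 / 2) :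
    ∃ σ : List (V × V), (∀ r ∈ σ, r.1 ≠ r.2) ∧ 0 < OPT c₀ σ ∧
      c * (OPT c₀ σ : ℝ) ≤ (onlineCost A c₀ σ : ℝ) := by
  obtain ⟨pn, hpn⟩ := exists_pn h3
  have hpn12 : ∀ x, (pn x).1 ≠ x ∧ (pn x).2 ≠ x := fun x => ⟨(hpn x).2.1, (hpn x).2.2.1⟩
  set m : ℕ := max 1 ⌈3 * c / (6 - 4 * c)⌉₊ with hm
  have hm1 : 1 ≤ m := le_max_left _ _
  set σ : List (V × V) := adv A c₀ pn m with hσ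
  have hlen : σ.length = m := length_adv A c₀ pn m
  have hOPT_lb : m ≤ OPT c₀ σ := by
    refine le_csInf ⟨schedCost c₀ σ (List.replicate m c₀),
      ⟨List.replicate m c₀, by simp [hlen], rfl⟩⟩ ?_
    rintro k ⟨cs, hcs, rfl⟩
    calc m = σ.length := hlen.symm
      _ ≤ schedCost c₀ σ cs := schedCost_length_le c₀ σ cs hcs
  obtain ⟨z, hz⟩ := exists_small_count h3 (exL A c₀ pn m)
  rw [length_exL] at hz
  have hserve : ∀ x, serveCost z (pn x) = if z = x then 2 else 1 := by
    intro x
    unfold serveCost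
    by_cases h : z = x
    · have hne : ¬(z = (pn x).1 ∨ z = (pn x).2) := by
        rintro (h1 | h1)
        · exact (hpn x).2.1 (by rw [← h1, h])
        · exact (hpn x).2.2.1 (by rw [← h1, h])
      rw [if_neg hne, if_pos h]
    · have hyes : z = (pn x).1 ∨ z = (pn x).2 := (hpn x).2.2.2 z h
      rw [if_pos hyes, if_neg h]
  have hsum : (σ.map (serveCost z)).sum = m + (exL A c₀ pn m).count z := by
    rw [hσ, adv_eq_map, List.map_map,
      show (serveCost z ∘ pn) = fun x => if z = x then 2 else 1 from funext hserve,
      sum_ite_count, length_exL]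
  have hOPT_ub : OPT c₀ σ ≤ 1 + m + m / 3 := by
    have h1 : OPT c₀ σ ≤ schedCost c₀ σ (List.replicate σ.length z) :=
      Nat.sInf_le ⟨List.replicate σ.length z, by simp, rfl⟩
    have h2 := schedCost_replicate_le c₀ z σ
    omega
  have hALG : 2 * m ≤ onlineCost A c₀ σ := online_lb A c₀ pn hpn12 m
  refine ⟨σ, ?_, ?_, ?_⟩
  · intro r hr
    rw [hσ, adv_eq_map] at hr
    obtain ⟨x, _, rfl⟩ := List.mem_map.mp hr
    exact (hpn x).1
  · omega
  · have hc6 : (0:ℝ) < 6 - 4 * c := by linarith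
    have hmc : 3 * c / (6 - 4 * c) ≤ (m : ℝ) :=
      le_trans (Nat.le_ceil _) (Nat.cast_le.mpr (le_max_right 1 _))
    rw [div_le_iff₀ hc6] at hmc
    have key : c * (4 * (m:ℝ) + 3) ≤ 6 * m := by nlinarith
    by_cases hcpos : c ≤ 0
    · have h0 : c * (OPT c₀ σ : ℝ) ≤ 0 :=
        mul_nonpos_of_nonpos_of_nonneg hcpos (Nat.cast_nonneg _)
      exact h0.trans (Nat.cast_nonneg _)
    · push_neg at hcpos
      have hOPTr : (OPT c₀ σ : ℝ) ≤ (4 * m + 3) / 3 := by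
        have h1 : (OPT c₀ σ : ℝ) ≤ ((1 + m + m / 3 : ℕ) : ℝ) := Nat.cast_le.mpr hOPT_ub
        have h2 : ((m / 3 : ℕ) : ℝ) ≤ (m : ℝ) / 3 := by
          have := Nat.cast_div_le (α := ℝ) (m := m) (n := 3)
          simpa using this
        push_cast at h1
        linarith
      have hALGr : (2 * m : ℝ) ≤ (onlineCost A c₀ σ : ℝ) := by exact_mod_cast hALG
      calc c * (OPT c₀ σ : ℝ) ≤ c * ((4 * m + 3) / 3) :=
            mul_le_mul_of_nonneg_left hOPTr (le_of_lt hcpos)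
        _ ≤ 2 * m := by linarith
        _ ≤ (onlineCost A c₀ σ : ℝ) := hALGr
end

section
/- Run PivotTracking and OPT* on the same finite request sequence σ from the same initial center c₀. For every request σ_i: PivotTracking applies its intersection behavior on σ_i if and only if σ_i is cheap for OPT*, and PivotTracking applies its union behavior on σ_i if and only if σ_i is expensive for OPT*. -/
/-- The sequence of phase lengths of a schedule: the lengths of the maximal
runs of consecutive requests served with the same center. -/
def phaseLens {V : Type*} [DecidableEq V] (cs : List V) : List ℕ :=
  (cs.splitBy (· == ·)).map List.length

/-- `IsOptStar c₀ σ cs` : `cs` is a minimum-cost schedule for `σ` that, among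
all minimum-cost schedules, minimizes the lexicographic order on the reversed
sequence of its phase lengths. -/
def IsOptStar {V : Type*} [DecidableEq V] (c₀ : V) (σ : List (V × V))
    (cs : List V) : Prop :=
  cs.length = σ.length ∧ schedCost c₀ σ cs = OPT c₀ σ ∧
    ∀ cs' : List V, cs'.length = σ.length → schedCost c₀ σ cs' = OPT c₀ σ →
      (phaseLens cs).reverse ≤ (phaseLens cs').reverse

/-- The cost (migration plus serving) that the schedule `cs` pays on the
`i`-th request of `σ` (0-based). -/
def optPay {V : Type*} [DecidableEq V] (c₀ : V) (σ : List (V × V))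
    (cs : List V) (i : ℕ) : ℕ :=
  (if cs.getD i c₀ = (if i = 0 then c₀ else cs.getD (i - 1) c₀) then 0 else 1)
    + serveCost (cs.getD i c₀) (σ.getD i (c₀, c₀))

/-- The sequence of states of PivotTracking: `(ptStates tb c₀ σ).get i` is the
state (center, candidate set) just before the `i`-th request is served. -/
def ptStates {V : Type*} [DecidableEq V] (tb : V → V → V) (c₀ : V)
    (σ : List (V × V)) : List (V × Finset V) :=
  σ.scanl (ptStep tb) (c₀, {c₀})

namespace PTaux

open List

variable {V : Type*} [DecidableEq V]

theorem serveCost_pos (c : V) (r : V × V) : 1 ≤ serveCost c r := by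
  unfold serveCost; split <;> omega

theorem serveCost_le (c : V) (r : V × V) : serveCost c r ≤ 2 := by
  unfold serveCost; split <;> omega

theorem serveCost_cases (c : V) (r : V × V) : serveCost c r = 1 ∨ serveCost c r = 2 := by
  unfold serveCost; split <;> simp

theorem serveCost_eq_one_iff (c : V) (r : V × V) :
    serveCost c r = 1 ↔ c ∈ ({r.1, r.2} : Finset V) := by
  unfold serveCost
  rw [Finset.mem_insert, Finset.mem_singleton]
  split <;> simp_all

section DP

variable [Fintype V] [Nonempty V]

def gmin (F : V → ℕ) : ℕ := Finset.univ.inf' Finset.univ_nonempty F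

theorem gmin_le (F : V → ℕ) (c : V) : gmin F ≤ F c :=
  Finset.inf'_le _ (Finset.mem_univ c)

theorem exists_gmin (F : V → ℕ) : ∃ c, gmin F = F c := by
  obtain ⟨c, _, h⟩ := Finset.exists_mem_eq_inf' (Finset.univ_nonempty (α := V)) F
  exact ⟨c, h⟩

def dpStep (F : V → ℕ) (r : V × V) (c : V) : ℕ := min (F c) (gmin F + 1) + serveCost c r

def F0 (c₀ : V) (c : V) : ℕ := if c = c₀ then 0 else 1

def hsuf : List (V × V) → V → ℕ
  | [], _ => 0
  | r :: τ, c => Finset.univ.inf' Finset.univ_nonempty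
      (fun c' => (if c' = c then 0 else 1) + serveCost c' r + hsuf τ c')

theorem dpStep_le (F : V → ℕ) (r : V × V) (b c : V) :
    dpStep F r c ≤ F b + ((if c = b then 0 else 1) + serveCost c r) := by
  have hg := gmin_le F b
  by_cases h : c = b
  · subst h
    have h1 := min_le_left (F c) (gmin F + 1)
    simp only [if_pos rfl, dpStep]
    omega
  · have h1 := min_le_right (F c) (gmin F + 1)
    simp only [if_neg h, dpStep]
    omega

theorem schedCost_append (σ₁ : List (V × V)) : ∀ (cs₁ : List V) (b : V)
    (σ₂ : List (V × V)) (cs₂ : List V), cs₁.length = σ₁.length →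
    schedCost b (σ₁ ++ σ₂) (cs₁ ++ cs₂) =
      schedCost b σ₁ cs₁ + schedCost (cs₁.getLastD b) σ₂ cs₂ := by
  induction σ₁ with
  | nil =>
    intro cs₁ b σ₂ cs₂ h
    rw [List.length_nil, List.length_eq_zero_iff] at h
    subst h
    simp [schedCost]
  | cons r σ₁ ih =>
    intro cs₁ b σ₂ cs₂ h
    cases cs₁ with
    | nil => simp at h
    | cons c cs₁ =>
      simp only [List.cons_append, schedCost, List.getLastD_cons, List.append_eq]
      rw [ih cs₁ c σ₂ cs₂ (by simpa using h)]
      omega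

theorem fold_le_schedCost (σ : List (V × V)) : ∀ (F : V → ℕ) (b : V) (cs : List V),
    cs.length = σ.length →
    (σ.foldl dpStep F) (cs.getLastD b) ≤ F b + schedCost b σ cs := by
  induction σ with
  | nil =>
    intro F b cs h
    rw [List.length_nil, List.length_eq_zero_iff] at h
    subst h
    simp [schedCost]
  | cons r σ ih =>
    intro F b cs h
    cases cs with
    | nil => simp at h
    | cons c cs =>
      simp only [List.foldl_cons, schedCost, List.getLastD_cons]
      have h1 := ih (dpStep F r) c cs (by simpa using h)
      have h2 := dpStep_le F r b c
      omega

theorem gmin_fold_le (σ : List (V × V)) : ∀ (F : V → ℕ) (c : V),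
    gmin (σ.foldl dpStep F) ≤ F c + hsuf σ c := by
  induction σ with
  | nil => intro F c; simpa [hsuf] using gmin_le F c
  | cons r σ ih =>
    intro F c
    obtain ⟨c', _, hc'⟩ := Finset.exists_mem_eq_inf' (Finset.univ_nonempty (α := V))
      (fun c' => (if c' = c then 0 else 1) + serveCost c' r + hsuf σ c')
    have h1 := ih (dpStep F r) c'
    have h2 := dpStep_le F r c c'
    simp only [List.foldl_cons, hsuf, hc']
    omega

theorem hsuf_le_schedCost (σ : List (V × V)) : ∀ (c : V) (cs : List V),
    cs.length = σ.length → hsuf σ c ≤ schedCost c σ cs := by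
  induction σ with
  | nil => intro c cs h; simp [hsuf]
  | cons r σ ih =>
    intro c cs h
    cases cs with
    | nil => simp at h
    | cons c' cs =>
      have h1 := ih c' cs (by simpa using h)
      have h2 : hsuf (r :: σ) c ≤ (if c' = c then 0 else 1) + serveCost c' r + hsuf σ c' := by
        simp only [hsuf]
        exact Finset.inf'_le _ (Finset.mem_univ c')
      simp only [schedCost]
      omega

theorem exists_schedCost_eq_hsuf (σ : List (V × V)) : ∀ c : V, ∃ cs : List V,
    cs.length = σ.length ∧ schedCost c σ cs = hsuf σ c := by
  induction σ with
  | nil => intro c; exact ⟨[], rfl, by simp [schedCost, hsuf]⟩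
  | cons r σ ih =>
    intro c
    obtain ⟨c', _, hc'⟩ := Finset.exists_mem_eq_inf' (Finset.univ_nonempty (α := V))
      (fun c' => (if c' = c then 0 else 1) + serveCost c' r + hsuf σ c')
    obtain ⟨cs, hlen, hcost⟩ := ih c'
    refine ⟨c' :: cs, by simp [hlen], ?_⟩
    simp only [schedCost, hsuf, hc', hcost]

theorem OPT_eq_hsuf (c₀ : V) (σ : List (V × V)) : OPT c₀ σ = hsuf σ c₀ := by
  obtain ⟨cs, hlen, hcost⟩ := exists_schedCost_eq_hsuf σ c₀
  unfold OPT
  apply Nat.le_antisymm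
  · have hmem : ∃ cs' : List V, cs'.length = σ.length ∧ schedCost c₀ σ cs' = hsuf σ c₀ :=
      ⟨cs, hlen, hcost⟩
    exact Nat.sInf_le hmem
  · have hne : {k | ∃ cs' : List V, cs'.length = σ.length ∧ schedCost c₀ σ cs' = k}.Nonempty :=
      ⟨schedCost c₀ σ cs, cs, hlen, rfl⟩
    apply le_csInf hne
    rintro k ⟨cs', hlen', rfl⟩
    exact hsuf_le_schedCost σ c₀ cs' hlen'

theorem exists_good_schedule (c₀ : V) (σ : List (V × V)) :
    ∀ q : V, ∃ cs : List V, cs.length = σ.length ∧ (σ = [] ∨ cs.getLastD c₀ = q) ∧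
      schedCost c₀ σ cs ≤ (σ.foldl dpStep (F0 c₀)) q := by
  induction σ using List.reverseRecOn with
  | nil => intro q; exact ⟨[], rfl, Or.inl rfl, by simp [schedCost]⟩
  | append_singleton τ r ih =>
    intro q
    have hstep : ∀ x : V, ((τ ++ [r]).foldl dpStep (F0 c₀)) x
        = min ((τ.foldl dpStep (F0 c₀)) x) (gmin (τ.foldl dpStep (F0 c₀)) + 1) + serveCost x r := by
      intro x
      rw [List.foldl_append]
      rfl
    by_cases hcase : (τ.foldl dpStep (F0 c₀)) q ≤ gmin (τ.foldl dpStep (F0 c₀)) + 1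
    · obtain ⟨u, hlen, hlast, hcost⟩ := ih q
      refine ⟨u ++ [q], by simp [hlen], Or.inr (by simp), ?_⟩
      rw [schedCost_append τ u c₀ [r] [q] hlen, hstep q, min_eq_left hcase]
      rcases hlast with h | h
      · subst h
        have hu : u = [] := by simpa using hlen
        subst hu
        simp only [schedCost, List.getLastD_nil, List.foldl_nil, F0]
        by_cases hq : q = c₀ <;> simp [hq]
      · rw [h]
        simp only [schedCost, if_pos rfl, eq_self_iff_true, if_true]
        omega
    · obtain ⟨q', hq'⟩ := exists_gmin (τ.foldl dpStep (F0 c₀))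
      obtain ⟨u, hlen, hlast, hcost⟩ := ih q'
      refine ⟨u ++ [q], by simp [hlen], Or.inr (by simp), ?_⟩
      rw [schedCost_append τ u c₀ [r] [q] hlen, hstep q,
        min_eq_right (by omega)]
      rw [← hq'] at hcost
      simp only [schedCost]
      have : (if q = u.getLastD c₀ then 0 else 1) ≤ 1 := by split <;> omega
      omega

theorem OPT_le_fold (c₀ : V) (σ : List (V × V)) (q : V) :
    OPT c₀ σ ≤ (σ.foldl dpStep (F0 c₀)) q := by
  obtain ⟨cs, hlen, _, hcost⟩ := exists_good_schedule c₀ σ q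
  refine le_trans ?_ hcost
  unfold OPT
  have hmem : ∃ cs' : List V, cs'.length = σ.length ∧ schedCost c₀ σ cs' = schedCost c₀ σ cs :=
    ⟨cs, hlen, rfl⟩
  exact Nat.sInf_le hmem

theorem gmin_fold_eq_OPT (c₀ : V) (σ : List (V × V)) :
    gmin (σ.foldl dpStep (F0 c₀)) = OPT c₀ σ := by
  apply Nat.le_antisymm
  · have h := gmin_fold_le σ (F0 c₀) c₀
    rw [OPT_eq_hsuf]
    simpa [F0] using h
  · obtain ⟨q, hq⟩ := exists_gmin (σ.foldl dpStep (F0 c₀))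
    rw [hq]
    exact OPT_le_fold c₀ σ q

theorem tight (c₀ : V) (σ₁ σ₂ : List (V × V)) (cs₁ cs₂ : List V)
    (h1 : cs₁.length = σ₁.length) (h2 : cs₂.length = σ₂.length)
    (hopt : schedCost c₀ (σ₁ ++ σ₂) (cs₁ ++ cs₂) = OPT c₀ (σ₁ ++ σ₂)) :
    schedCost c₀ σ₁ cs₁ = (σ₁.foldl dpStep (F0 c₀)) (cs₁.getLastD c₀) ∧
    schedCost (cs₁.getLastD c₀) σ₂ cs₂ = hsuf σ₂ (cs₁.getLastD c₀) := by
  have hsplit := schedCost_append σ₁ cs₁ c₀ σ₂ cs₂ h1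
  have hF : (σ₁.foldl dpStep (F0 c₀)) (cs₁.getLastD c₀) ≤ schedCost c₀ σ₁ cs₁ := by
    have h := fold_le_schedCost σ₁ (F0 c₀) c₀ cs₁ h1
    simpa [F0] using h
  have hH : hsuf σ₂ (cs₁.getLastD c₀) ≤ schedCost (cs₁.getLastD c₀) σ₂ cs₂ :=
    hsuf_le_schedCost σ₂ _ cs₂ h2
  have hOPTle : OPT c₀ (σ₁ ++ σ₂) ≤
      (σ₁.foldl dpStep (F0 c₀)) (cs₁.getLastD c₀) + hsuf σ₂ (cs₁.getLastD c₀) := by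
    rw [← gmin_fold_eq_OPT, List.foldl_append]
    exact gmin_fold_le σ₂ _ _
  omega

end DP



theorem loop_extract {α : Type*} (R : α → α → Bool) : ∀ (l : List α) (a : α) (g : List α)
    (gs : List (List α)),
    splitBy.loop R l a g gs = gs.reverse ++ splitBy.loop R l a g [] := by
  intro l
  induction l with
  | nil => intros; simp [splitBy.loop]
  | cons b l ih =>
    intro a g gs
    cases hR : R a b
    · simp only [splitBy.loop, hR]
      rw [ih b [] ((a :: g).reverse :: gs), ih b [] [(a :: g).reverse]]
      simp
    · simp only [splitBy.loop, hR]
      rw [ih b (a :: g) gs]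

theorem loop_append {α : Type*} (R : α → α → Bool) : ∀ (l₁ : List α) (a : α) (g : List α)
    (gs : List (List α)) (b : α) (l₂ : List α),
    R (l₁.getLastD a) b = false →
    splitBy.loop R (l₁ ++ b :: l₂) a g gs = splitBy.loop R l₁ a g gs ++ splitBy R (b :: l₂) := by
  intro l₁
  induction l₁ with
  | nil =>
    intro a g gs b l₂ h
    simp only [List.getLastD_nil] at h
    simp only [List.nil_append, splitBy.loop, h]
    rw [loop_extract R l₂ b [] ((a :: g).reverse :: gs)]
    simp [splitBy]
  | cons x l₁ ih =>
    intro a g gs b l₂ h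
    rw [List.getLastD_cons] at h
    simp only [List.cons_append]
    cases hR : R a x
    · simp only [splitBy.loop, hR]
      exact ih x [] _ b l₂ h
    · simp only [splitBy.loop, hR]
      exact ih x (a :: g) gs b l₂ h

theorem loop_run {α : Type*} [DecidableEq α] (c : α) (v : List α) (hv : v.head? ≠ some c) :
    ∀ (n : ℕ) (g : List α) (gs : List (List α)),
    splitBy.loop (· == ·) (List.replicate n c ++ v) c g gs
      = gs.reverse ++ ((c :: g).reverse ++ List.replicate n c) :: splitBy (· == ·) v := by
  intro n
  induction n with
  | zero =>
    intro g gs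
    simp only [List.replicate, List.nil_append]
    cases v with
    | nil => simp [splitBy.loop, splitBy]
    | cons b v' =>
      have hbc : (c == b) = false := by
        rw [beq_eq_false_iff_ne]
        intro hcb
        exact hv (by rw [List.head?_cons, hcb])
      simp only [splitBy.loop, hbc]
      rw [loop_extract]
      simp [splitBy]
  | succ m ih =>
    intro g gs
    rw [List.replicate_succ, List.cons_append]
    have hcc : (c == c) = true := beq_self_eq_true c
    simp only [splitBy.loop, hcc]
    rw [ih (c :: g) gs]
    simp [List.replicate_succ]

theorem splitBy_cons_eq {α : Type*} (R : α → α → Bool) (a : α) (as : List α) :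
    List.splitBy R (a :: as) = List.splitBy.loop R as a [] [] := rfl

theorem splitBy_replicate_append {α : Type*} [DecidableEq α] (n : ℕ) (c : α) (v : List α)
    (hv : v.head? ≠ some c) :
    List.splitBy (· == ·) (List.replicate (n + 1) c ++ v)
      = List.replicate (n + 1) c :: List.splitBy (· == ·) v := by
  rw [List.replicate_succ, List.cons_append, splitBy_cons_eq, loop_run c v hv n [] []]
  simp [List.replicate_succ]

theorem splitBy_append' {α : Type*} [DecidableEq α] (a : α) (t : List α) (b : α) (l₂ : List α)
    (h : ((t.getLastD a) == b) = false) :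
    List.splitBy (· == ·) ((a :: t) ++ b :: l₂)
      = List.splitBy (· == ·) (a :: t) ++ List.splitBy (· == ·) (b :: l₂) := by
  simp only [List.cons_append, splitBy]
  exact loop_append _ t a [] [] b l₂ h

theorem lex_append (t : List ℕ) (n₁ n₂ : ℕ) (l₁ l₂ : List ℕ) (h : n₁ < n₂) :
    List.Lex (· < ·) (t ++ n₁ :: l₁) (t ++ n₂ :: l₂) := by
  induction t with
  | nil => exact List.Lex.rel h
  | cons x t ih => exact List.Lex.cons ih

theorem getLast?_cons_eq {α : Type*} : ∀ (t : List α) (a : α),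
    (a :: t).getLast? = some (t.getLastD a) := by
  intro t
  induction t with
  | nil => intro a; rfl
  | cons b t ih =>
    intro a
    rw [List.getLast?_cons_cons, ih b, List.getLastD_cons]

theorem last_run {α : Type*} [DecidableEq α] : ∀ (l : List α) (c : α), l.getLast? = some c →
    ∃ x k, l = x ++ List.replicate (k + 1) c ∧ x.getLast? ≠ some c := by
  intro l
  induction l with
  | nil => intro c h; simp at h
  | cons a l ih =>
    intro c h
    cases l with
    | nil =>
      have : a = c := by simpa using h
      subst this
      exact ⟨[], 0, by simp, by simp⟩
    | cons b l' =>
      rw [List.getLast?_cons_cons] at h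
      obtain ⟨x, k, hx, hxl⟩ := ih c h
      cases x with
      | nil =>
        simp only [List.nil_append] at hx
        by_cases hac : a = c
        · subst hac
          refine ⟨[], k + 1, ?_, by simp⟩
          rw [List.nil_append, List.replicate_succ, hx]
        · refine ⟨[a], k, ?_, by simpa using hac⟩
          rw [hx]; rfl
      | cons y x' =>
        refine ⟨a :: y :: x', k, by rw [hx]; rfl, ?_⟩
        rw [List.getLast?_cons_cons]
        exact hxl

theorem head_run {α : Type*} [DecidableEq α] : ∀ (w : List α) (c : α),
    ∃ j v, c :: w = List.replicate (j + 1) c ++ v ∧ v.head? ≠ some c := by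
  intro w
  induction w with
  | nil => intro c; exact ⟨0, [], by simp, by simp⟩
  | cons a w' ih =>
    intro c
    by_cases hac : a = c
    · subst hac
      obtain ⟨j, v, hv, hh⟩ := ih a
      refine ⟨j + 1, v, ?_, hh⟩
      rw [List.replicate_succ, List.cons_append, ← hv]
    · refine ⟨0, a :: w', by simp, by simpa using fun h => hac h⟩

theorem lex_main {α : Type*} [DecidableEq α] (cs₁ u : List α) (c q : α) (w : List α)
    (h1 : cs₁.getLast? = some c) (h2 : u.getLast? = some q) (hqc : q ≠ c) :
    List.Lex (· < ·) (phaseLens (u ++ c :: w)).reverse (phaseLens (cs₁ ++ c :: w)).reverse := by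
  obtain ⟨j, v, hw, hvh⟩ := head_run w c
  obtain ⟨x, k, hx, hxl⟩ := last_run cs₁ c h1
  obtain ⟨a, t, rfl⟩ : ∃ a t, u = a :: t := by
    cases u with
    | nil => simp at h2
    | cons a t => exact ⟨a, t, rfl⟩
  rw [getLast?_cons_eq] at h2
  have hq : t.getLastD a = q := by simpa using h2
  have hu : phaseLens ((a :: t) ++ c :: w) = phaseLens (a :: t) ++ (j + 1) :: phaseLens v := by
    unfold phaseLens
    rw [splitBy_append' a t c w (by rw [hq]; exact beq_eq_false_iff_ne.mpr hqc)]
    rw [List.map_append]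
    congr 1
    rw [show (c :: w) = List.replicate (j + 1) c ++ v from hw]
    rw [splitBy_replicate_append j c v hvh]
    simp
  have hrepl : (c :: w) = List.replicate (j + 1) c ++ v := hw
  have hcs : phaseLens (cs₁ ++ c :: w) = phaseLens x ++ (k + j + 2) :: phaseLens v := by
    unfold phaseLens
    rw [hx, hrepl, List.append_assoc, ← List.append_assoc (List.replicate (k+1) c),
      ← List.replicate_add]
    have hkj : k + 1 + (j + 1) = (k + j + 1) + 1 := by omega
    rw [hkj]
    cases x with
    | nil =>
      rw [List.nil_append, splitBy_replicate_append _ c v hvh]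
      simp
    | cons a' t' =>
      have hxl' : (t'.getLastD a') ≠ c := by
        rw [getLast?_cons_eq] at hxl
        simpa using hxl
      rw [show List.replicate ((k + j + 1) + 1) c ++ v = c :: (List.replicate (k + j + 1) c ++ v) by
        simp [List.replicate_succ]]
      rw [splitBy_append' a' t' c _ (beq_eq_false_iff_ne.mpr hxl')]
      rw [List.map_append]
      congr 1
      rw [show c :: (List.replicate (k + j + 1) c ++ v) = List.replicate ((k + j + 1) + 1) c ++ v by
        simp [List.replicate_succ]]
      rw [splitBy_replicate_append _ c v hvh]
      simp
  rw [hu, hcs]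
  have hrev : ∀ (A : List ℕ) (n : ℕ) (B : List ℕ),
      (A ++ n :: B).reverse = B.reverse ++ n :: A.reverse := by
    intro A n B
    simp
  rw [hrev, hrev]
  exact lex_append _ _ _ _ _ (by omega)


section CORE

variable [Fintype V] [Nonempty V]

def AF (F : V → ℕ) : Finset V := Finset.univ.filter fun c => F c = gmin F

theorem mem_AF {F : V → ℕ} {c : V} : c ∈ AF F ↔ F c = gmin F := by simp [AF]

theorem core_inter (F : V → ℕ) (r : V × V) (h : (AF F ∩ {r.1, r.2}).Nonempty) :
    gmin (dpStep F r) = gmin F + 1 ∧ AF (dpStep F r) = AF F ∩ {r.1, r.2} := by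
  obtain ⟨p, hp⟩ := h
  rw [Finset.mem_inter, mem_AF] at hp
  obtain ⟨hp1, hp2⟩ := hp
  have hps : serveCost p r = 1 := (serveCost_eq_one_iff p r).mpr hp2
  have hub : ∀ x, gmin F + 1 ≤ dpStep F r x := by
    intro x
    have h1 : gmin F ≤ min (F x) (gmin F + 1) := le_min (gmin_le F x) (by omega)
    have h2 := serveCost_pos x r
    unfold dpStep
    omega
  have hval : dpStep F r p = gmin F + 1 := by
    unfold dpStep
    rw [hp1, hps, min_eq_left (by omega)]
  have hg : gmin (dpStep F r) = gmin F + 1 := by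
    apply Nat.le_antisymm
    · calc gmin (dpStep F r) ≤ dpStep F r p := gmin_le _ p
        _ = gmin F + 1 := hval
    · obtain ⟨x, hx⟩ := exists_gmin (dpStep F r)
      rw [hx]; exact hub x
  refine ⟨hg, ?_⟩
  ext x
  rw [mem_AF, hg, Finset.mem_inter, mem_AF, ← serveCost_eq_one_iff]
  constructor
  · intro hx
    unfold dpStep at hx
    have h1 := serveCost_pos x r
    have h2 := gmin_le F x
    have h3 := min_le_right (F x) (gmin F + 1)
    have h4 : gmin F ≤ min (F x) (gmin F + 1) := le_min h2 (by omega)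
    rcases min_choice (F x) (gmin F + 1) with h5 | h5 <;> omega
  · rintro ⟨h1, h2⟩
    unfold dpStep
    rw [h1, h2, min_eq_left (by omega)]

theorem core_union (F : V → ℕ) (r : V × V) (h : ¬ (AF F ∩ {r.1, r.2}).Nonempty) :
    gmin (dpStep F r) = gmin F + 2 ∧ AF (dpStep F r) = AF F ∪ {r.1, r.2} := by
  have hdisj : ∀ x, ¬ (F x = gmin F ∧ x ∈ ({r.1, r.2} : Finset V)) := by
    intro x hx
    exact h ⟨x, Finset.mem_inter.mpr ⟨mem_AF.mpr hx.1, hx.2⟩⟩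
  have hA : ∀ x, F x = gmin F → serveCost x r = 2 := by
    intro x hx
    rcases serveCost_cases x r with h1 | h1
    · exact absurd ⟨hx, (serveCost_eq_one_iff x r).mp h1⟩ (hdisj x)
    · exact h1
  have hB : ∀ x, serveCost x r = 1 → gmin F + 1 ≤ F x := by
    intro x hx
    have h2 := gmin_le F x
    rcases Nat.eq_or_lt_of_le h2 with h3 | h3
    · exact absurd ⟨h3.symm, (serveCost_eq_one_iff x r).mp hx⟩ (hdisj x)
    · omega
  have hub : ∀ x, gmin F + 2 ≤ dpStep F r x := by
    intro x
    unfold dpStep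
    rcases serveCost_cases x r with h1 | h1
    · have h2 : gmin F + 1 ≤ min (F x) (gmin F + 1) := le_min (hB x h1) (by omega)
      omega
    · have h2 : gmin F ≤ min (F x) (gmin F + 1) := le_min (gmin_le F x) (by omega)
      omega
  obtain ⟨p, hp⟩ := exists_gmin F
  have hval : dpStep F r p = gmin F + 2 := by
    unfold dpStep
    rw [← hp, hA p hp.symm, min_eq_left (by omega)]
  have hg : gmin (dpStep F r) = gmin F + 2 := by
    apply Nat.le_antisymm
    · calc gmin (dpStep F r) ≤ dpStep F r p := gmin_le _ p
        _ = gmin F + 2 := hval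
    · obtain ⟨x, hx⟩ := exists_gmin (dpStep F r)
      rw [hx]; exact hub x
  refine ⟨hg, ?_⟩
  ext x
  rw [mem_AF, hg, Finset.mem_union, mem_AF]
  constructor
  · intro hx
    by_cases h1 : F x = gmin F
    · exact Or.inl h1
    · right
      rw [← serveCost_eq_one_iff]
      rcases serveCost_cases x r with h2 | h2
      · exact h2
      · exfalso
        have h3 := gmin_le F x
        have h4 : gmin F + 1 ≤ min (F x) (gmin F + 1) := le_min (by omega) (by omega)
        unfold dpStep at hx
        omega
  · intro hx
    unfold dpStep
    rcases hx with h1 | h1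
    · rw [h1, hA x h1, min_eq_left (by omega)]
    · rw [← serveCost_eq_one_iff] at h1
      rw [h1, min_eq_right (hB x h1)]

theorem AF_F0 (c₀ : V) : AF (F0 c₀) = {c₀} := by
  have h0 : F0 c₀ c₀ = 0 := by simp [F0]
  have hg : gmin (F0 c₀) = 0 := by
    have := gmin_le (F0 c₀) c₀
    omega
  ext x
  rw [mem_AF, hg, Finset.mem_singleton]
  unfold F0
  split <;> simp_all

theorem pt_snd_eq (tb : V → V → V) (σ : List (V × V)) :
    ∀ (st : V × Finset V) (F : V → ℕ), st.2 = AF F →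
    (σ.foldl (ptStep tb) st).2 = AF (σ.foldl dpStep F) := by
  induction σ with
  | nil => intro st F hst; simpa using hst
  | cons r σ ih =>
    intro st F hst
    simp only [List.foldl_cons]
    apply ih
    by_cases h : (AF F ∩ {r.1, r.2}).Nonempty
    · have hset := (core_inter F r h).2
      unfold ptStep
      rw [hst, if_pos h]
      exact hset.symm
    · have hset := (core_union F r h).2
      unfold ptStep
      rw [hst, if_neg h]
      exact hset.symm

end CORE

theorem scanl_getD {α β : Type*} (f : β → α → β) : ∀ (l : List α) (i : ℕ) (b d : β),
    i ≤ l.length → (List.scanl f b l).getD i d = List.foldl f b (l.take i) := by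
  intro l
  induction l with
  | nil =>
    intro i b d h
    have h0 : i = 0 := Nat.le_zero.mp (by simpa using h)
    subst h0
    rfl
  | cons a l ih =>
    intro i b d h
    cases i with
    | zero => simp
    | succ j =>
      rw [List.scanl_cons, List.take_succ_cons, List.foldl_cons]
      simp only [List.singleton_append, List.getD_cons_succ]
      exact ih j (f b a) d (by simpa using h)

theorem getLastD_take {α : Type*} : ∀ (i : ℕ) (cs : List α) (d : α), i + 1 ≤ cs.length →
    (cs.take (i + 1)).getLastD d = cs.getD i d := by
  intro i
  induction i with
  | zero =>
    intro cs d h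
    cases cs with
    | nil => simp at h
    | cons c cs => rfl
  | succ j ih =>
    intro cs d h
    cases cs with
    | nil => simp at h
    | cons c cs =>
      rw [List.take_succ_cons, List.getLastD_cons, List.getD_cons_succ,
        ih cs c (by simpa using h)]
      have hj : j < cs.length := by simpa using h
      rw [List.getD_eq_getElem cs c hj, List.getD_eq_getElem cs d hj]

theorem take_succ_getD {α : Type*} : ∀ (l : List α) (i : ℕ) (d : α), i < l.length →
    l.take (i + 1) = l.take i ++ [l.getD i d] := by
  intro l
  induction l with
  | nil => intro i d h; simp at h
  | cons a l ih =>
    intro i d h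
    cases i with
    | zero => rfl
    | succ j =>
      rw [List.take_succ_cons, List.take_succ_cons, List.getD_cons_succ,
        ih j d (by simpa using h)]
      rfl

section MAIN

variable [Fintype V] [Nonempty V]

theorem getLast?_eq_getLastD {α : Type*} (l : List α) (d : α) (h : l ≠ []) :
    l.getLast? = some (l.getLastD d) := by
  cases l with
  | nil => exact absurd rfl h
  | cons a t => rw [getLast?_cons_eq, List.getLastD_cons]

theorem optstar_mem (c₀ : V) (σ : List (V × V)) (cs : List V) (hstar : IsOptStar c₀ σ cs) :
    ∀ (σ₂ σ₁ : List (V × V)) (cs₁ cs₂ : List V),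
      σ = σ₁ ++ σ₂ → cs = cs₁ ++ cs₂ → cs₁.length = σ₁.length →
      (σ₁.foldl dpStep (F0 c₀)) (cs₁.getLastD c₀) = gmin (σ₁.foldl dpStep (F0 c₀)) := by
  obtain ⟨hlen, hcost, hlex⟩ := hstar
  intro σ₂
  induction σ₂ with
  | nil =>
    intro σ₁ cs₁ cs₂ hσ hcs h1
    have hl2 : cs₂.length = 0 := by
      have h := hlen
      rw [hσ, hcs] at h
      simp only [List.length_append, List.length_nil] at h
      omega
    have hcs₂ : cs₂ = [] := List.length_eq_zero_iff.mp hl2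
    subst hcs₂
    have hσ' : σ = σ₁ := by simpa using hσ
    have hcs' : cs = cs₁ := by simpa using hcs
    subst hσ'
    subst hcs'
    have hopt' : schedCost c₀ (σ ++ []) (cs ++ []) = OPT c₀ (σ ++ []) := by
      simpa using hcost
    have hT := (tight c₀ σ [] cs [] h1 rfl hopt').1
    rw [hcost] at hT
    rw [gmin_fold_eq_OPT]
    exact hT.symm
  | cons r σ₂' ih =>
    intro σ₁ cs₁ cs₂ hσ hcs h1
    have hl2 : cs₂.length = σ₂'.length + 1 := by
      have h := hlen
      rw [hσ, hcs] at h
      simp only [List.length_append, List.length_cons] at h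
      omega
    obtain ⟨c, ct, rfl⟩ : ∃ c t, cs₂ = c :: t := by
      cases cs₂ with
      | nil => simp at hl2
      | cons c t => exact ⟨c, t, rfl⟩
    have hct : ct.length = σ₂'.length := by simpa using hl2
    have hσA : σ = (σ₁ ++ [r]) ++ σ₂' := by rw [hσ]; simp
    have hcsA : cs = (cs₁ ++ [c]) ++ ct := by rw [hcs]; simp
    have h1A : (cs₁ ++ [c]).length = (σ₁ ++ [r]).length := by simp [h1]
    have hlastA : (cs₁ ++ [c]).getLastD c₀ = c := by
      rw [List.getLastD_eq_getLast?, List.getLast?_concat]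
      rfl
    have hfoldA : ((σ₁ ++ [r]).foldl dpStep (F0 c₀))
        = dpStep (σ₁.foldl dpStep (F0 c₀)) r := by
      rw [List.foldl_append]; rfl
    have hIH := ih (σ₁ ++ [r]) (cs₁ ++ [c]) ct hσA hcsA h1A
    rw [hlastA, hfoldA] at hIH
    have hopt1 : schedCost c₀ (σ₁ ++ r :: σ₂') (cs₁ ++ c :: ct)
        = OPT c₀ (σ₁ ++ r :: σ₂') := by
      rw [← hσ, ← hcs]; exact hcost
    have hl2' : (c :: ct).length = (r :: σ₂').length := by simpa using hl2
    have hT := tight c₀ σ₁ (r :: σ₂') cs₁ (c :: ct) h1 hl2' hopt1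
    have hoptA : schedCost c₀ ((σ₁ ++ [r]) ++ σ₂') ((cs₁ ++ [c]) ++ ct)
        = OPT c₀ ((σ₁ ++ [r]) ++ σ₂') := by
      rw [← hσA, ← hcsA]; exact hcost
    have hTA := (tight c₀ (σ₁ ++ [r]) σ₂' (cs₁ ++ [c]) ct h1A hct hoptA).1
    rw [hlastA, hfoldA, hIH] at hTA
    have hPsplit : schedCost c₀ (σ₁ ++ [r]) (cs₁ ++ [c])
        = schedCost c₀ σ₁ cs₁
          + ((if c = cs₁.getLastD c₀ then 0 else 1) + serveCost c r + 0) := by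
      rw [schedCost_append σ₁ cs₁ c₀ [r] [c] h1]
      rfl
    have hgub : gmin (dpStep (σ₁.foldl dpStep (F0 c₀)) r)
        ≤ gmin (σ₁.foldl dpStep (F0 c₀)) + 2 := by
      obtain ⟨q0, hq0⟩ := exists_gmin (σ₁.foldl dpStep (F0 c₀))
      have h2 := serveCost_le q0 r
      have h3 : min ((σ₁.foldl dpStep (F0 c₀)) q0) (gmin (σ₁.foldl dpStep (F0 c₀)) + 1)
          ≤ gmin (σ₁.foldl dpStep (F0 c₀)) :=
        le_trans (min_le_left _ _) (le_of_eq hq0.symm)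
      calc gmin (dpStep (σ₁.foldl dpStep (F0 c₀)) r)
            ≤ dpStep (σ₁.foldl dpStep (F0 c₀)) r q0 := gmin_le _ _
        _ ≤ gmin (σ₁.foldl dpStep (F0 c₀)) + 2 := by
            have h4 : dpStep (σ₁.foldl dpStep (F0 c₀)) r q0
                = min ((σ₁.foldl dpStep (F0 c₀)) q0) (gmin (σ₁.foldl dpStep (F0 c₀)) + 1)
                  + serveCost q0 r := rfl
            omega
    by_contra hne
    have hge : gmin (σ₁.foldl dpStep (F0 c₀)) + 1
        ≤ (σ₁.foldl dpStep (F0 c₀)) (cs₁.getLastD c₀) := by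
      have := gmin_le (σ₁.foldl dpStep (F0 c₀)) (cs₁.getLastD c₀)
      omega
    have hPi := hT.1
    have hserve1 := serveCost_pos c r
    have hcl : c = cs₁.getLastD c₀ := by
      by_contra hcl
      rw [if_neg hcl] at hPsplit
      omega
    rw [if_pos hcl] at hPsplit
    have hserveck : serveCost c r = 1 := by omega
    have hFl : (σ₁.foldl dpStep (F0 c₀)) (cs₁.getLastD c₀)
        = gmin (σ₁.foldl dpStep (F0 c₀)) + 1 := by omega
    have hσ₁ne : σ₁ ≠ [] := by
      rintro rfl
      have hcs₁ : cs₁ = [] := List.length_eq_zero_iff.mp (by simpa using h1)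
      subst hcs₁
      simp only [List.foldl_nil, List.getLastD_nil] at hFl
      have hF00 : F0 c₀ c₀ = 0 := by simp [F0]
      omega
    obtain ⟨q, hq⟩ := exists_gmin (σ₁.foldl dpStep (F0 c₀))
    obtain ⟨u, hul, hulast, hucost⟩ := exists_good_schedule c₀ σ₁ q
    have hulast' : u.getLastD c₀ = q := hulast.resolve_left hσ₁ne
    rw [← hq] at hucost
    have hune : u ≠ [] := by
      intro h0
      rw [h0] at hul
      have : σ₁.length = 0 := by simpa using hul.symm
      exact hσ₁ne (List.length_eq_zero_iff.mp this)
    have hqne : q ≠ c := by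
      intro h0
      rw [h0, hcl] at hq
      omega
    have hlen' : (u ++ c :: ct).length = (σ₁ ++ r :: σ₂').length := by
      simp [hul, hct]
    have hOPTval : OPT c₀ (σ₁ ++ r :: σ₂')
        = schedCost c₀ σ₁ cs₁ + (0 + serveCost c r + schedCost c σ₂' ct) := by
      rw [← hopt1, schedCost_append σ₁ cs₁ c₀ (r :: σ₂') (c :: ct) h1]
      congr 1
      show schedCost (cs₁.getLastD c₀) (r :: σ₂') (c :: ct) = _
      simp only [schedCost]
      rw [if_pos hcl]
    have hcostle : schedCost c₀ (σ₁ ++ r :: σ₂') (u ++ c :: ct)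
        ≤ OPT c₀ (σ₁ ++ r :: σ₂') := by
      rw [schedCost_append σ₁ u c₀ (r :: σ₂') (c :: ct) hul, hOPTval]
      have hS : schedCost (u.getLastD c₀) (r :: σ₂') (c :: ct)
          = (if c = q then 0 else 1) + serveCost c r + schedCost c σ₂' ct := by
        rw [hulast']
        simp only [schedCost]
      have hif : (if c = q then 0 else 1) ≤ 1 := by split <;> omega
      omega
    have hEq : schedCost c₀ (σ₁ ++ r :: σ₂') (u ++ c :: ct) = OPT c₀ (σ₁ ++ r :: σ₂') := by
      apply Nat.le_antisymm hcostle
      unfold OPT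
      have hmem : ∃ cs' : List V, cs'.length = (σ₁ ++ r :: σ₂').length ∧
          schedCost c₀ (σ₁ ++ r :: σ₂') cs' = schedCost c₀ (σ₁ ++ r :: σ₂') (u ++ c :: ct) :=
        ⟨u ++ c :: ct, hlen', rfl⟩
      exact Nat.sInf_le hmem
    have hlexle := hlex (u ++ c :: ct) (by rw [hσ]; exact hlen') (by rw [hσ]; exact hEq)
    rw [hcs] at hlexle
    have hcs₁ne : cs₁ ≠ [] := by
      intro h0
      rw [h0] at h1
      have : σ₁.length = 0 := by simpa using h1.symm
      exact hσ₁ne (List.length_eq_zero_iff.mp this)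
    have hLex := lex_main cs₁ u c q ct
      (by rw [getLast?_eq_getLastD cs₁ c₀ hcs₁ne, hcl])
      (by rw [getLast?_eq_getLastD u c₀ hune, hulast'])
      hqne
    have hnot : ¬ ((phaseLens (u ++ c :: ct)).reverse
        < (phaseLens (cs₁ ++ c :: ct)).reverse) := not_lt.mpr hlexle
    exact hnot hLex

end MAIN

end PTaux

/-- **tracking lemma.** Run PivotTracking and `OPT*` on the
same finite request sequence `σ` from the same initial center `c₀`.  For every
request `σᵢ`: PivotTracking applies its intersection behavior on `σᵢ`
(i.e. the candidate set before step `i` intersects `σᵢ`) iff `σᵢ` is cheap for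
`OPT*` (`OPT*` pays `1` on it), and PivotTracking applies its union behavior
on `σᵢ` iff `σᵢ` is expensive for `OPT*` (`OPT*` pays `2` on it). -/
theorem pivotTracking_tracks_optStar
    {V : Type*} [DecidableEq V] [Fintype V] (hn : 3 ≤ Fintype.card V)
    (c₀ : V) (σ : List (V × V)) (hσ : ∀ r ∈ σ, r.1 ≠ r.2)
    (tb : V → V → V) (htb : ∀ u v : V, tb u v = u ∨ tb u v = v)
    (cs : List V) (hstar : IsOptStar c₀ σ cs) (i : ℕ) (hi : i < σ.length) :
    ((((ptStates tb c₀ σ).getD i (c₀, {c₀})).2 ∩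
        {(σ.getD i (c₀, c₀)).1, (σ.getD i (c₀, c₀)).2}).Nonempty
      ↔ optPay c₀ σ cs i = 1) ∧
    (¬ (((ptStates tb c₀ σ).getD i (c₀, {c₀})).2 ∩
        {(σ.getD i (c₀, c₀)).1, (σ.getD i (c₀, c₀)).2}).Nonempty
      ↔ optPay c₀ σ cs i = 2) := by
  haveI : Nonempty V := Fintype.card_pos_iff.mp (by omega)
  have hlen := hstar.1
  have hcost := hstar.2.1
  have hi' : i < cs.length := by rw [hlen]; exact hi
  have hσsplit : σ = σ.take i ++ (σ.getD i (c₀, c₀) :: σ.drop (i + 1)) := by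
    conv_lhs => rw [← List.take_append_drop i σ]
    congr 1
    rw [List.drop_eq_getElem_cons hi, List.getD_eq_getElem σ (c₀, c₀) hi]
  have hcssplit : cs = cs.take i ++ (cs.getD i c₀ :: cs.drop (i + 1)) := by
    conv_lhs => rw [← List.take_append_drop i cs]
    congr 1
    rw [List.drop_eq_getElem_cons hi', List.getD_eq_getElem cs c₀ hi']
  have hlt : (cs.take i).length = (σ.take i).length := by
    simp only [List.length_take]
    omega
  have hm1 := PTaux.optstar_mem c₀ σ cs hstar (σ.getD i (c₀, c₀) :: σ.drop (i + 1)) (σ.take i)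
    (cs.take i) (cs.getD i c₀ :: cs.drop (i + 1)) hσsplit hcssplit hlt
  have htakeσ : σ.take (i + 1) = σ.take i ++ [σ.getD i (c₀, c₀)] :=
    PTaux.take_succ_getD σ i _ hi
  have htakecs : cs.take (i + 1) = cs.take i ++ [cs.getD i c₀] :=
    PTaux.take_succ_getD cs i _ hi'
  have hσsplit2 : σ = σ.take (i + 1) ++ σ.drop (i + 1) := (List.take_append_drop _ σ).symm
  have hcssplit2 : cs = cs.take (i + 1) ++ cs.drop (i + 1) := (List.take_append_drop _ cs).symm
  have hlt2 : (cs.take (i + 1)).length = (σ.take (i + 1)).length := by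
    simp only [List.length_take]
    omega
  have hm2 := PTaux.optstar_mem c₀ σ cs hstar (σ.drop (i + 1)) (σ.take (i + 1))
    (cs.take (i + 1)) (cs.drop (i + 1)) hσsplit2 hcssplit2 hlt2
  have hopt1 : schedCost c₀ (σ.take i ++ (σ.getD i (c₀, c₀) :: σ.drop (i + 1)))
      (cs.take i ++ (cs.getD i c₀ :: cs.drop (i + 1)))
      = OPT c₀ (σ.take i ++ (σ.getD i (c₀, c₀) :: σ.drop (i + 1))) := by
    rw [← hσsplit, ← hcssplit]; exact hcost
  have hd1 : (cs.getD i c₀ :: cs.drop (i + 1)).length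
      = (σ.getD i (c₀, c₀) :: σ.drop (i + 1)).length := by
    simp only [List.length_cons, List.length_drop]
    omega
  have hT1 := (PTaux.tight c₀ (σ.take i) _ (cs.take i) _ hlt hd1 hopt1).1
  have hopt2 : schedCost c₀ (σ.take (i + 1) ++ σ.drop (i + 1))
      (cs.take (i + 1) ++ cs.drop (i + 1))
      = OPT c₀ (σ.take (i + 1) ++ σ.drop (i + 1)) := by
    rw [← hσsplit2, ← hcssplit2]; exact hcost
  have hd2 : (cs.drop (i + 1)).length = (σ.drop (i + 1)).length := by
    simp only [List.length_drop]
    omega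
  have hT2 := (PTaux.tight c₀ (σ.take (i + 1)) _ (cs.take (i + 1)) _ hlt2 hd2 hopt2).1
  have hlast2 : (cs.take (i + 1)).getLastD c₀ = cs.getD i c₀ := by
    rw [htakecs, List.getLastD_eq_getLast?, List.getLast?_concat]
    rfl
  have hfold2 : ((σ.take (i + 1)).foldl PTaux.dpStep (PTaux.F0 c₀))
      = PTaux.dpStep ((σ.take i).foldl PTaux.dpStep (PTaux.F0 c₀)) (σ.getD i (c₀, c₀)) := by
    rw [htakeσ, List.foldl_append]; rfl
  have hstep : schedCost c₀ (σ.take (i + 1)) (cs.take (i + 1))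
      = schedCost c₀ (σ.take i) (cs.take i)
        + ((if cs.getD i c₀ = (cs.take i).getLastD c₀ then 0 else 1)
           + serveCost (cs.getD i c₀) (σ.getD i (c₀, c₀)) + 0) := by
    rw [htakeσ, htakecs, PTaux.schedCost_append _ _ _ _ _ hlt]
    rfl
  rw [hlast2, hfold2] at hT2 hm2
  rw [hm1] at hT1
  have hprev : (if i = 0 then c₀ else cs.getD (i - 1) c₀) = (cs.take i).getLastD c₀ := by
    cases i with
    | zero => rfl
    | succ j =>
      rw [if_neg (Nat.succ_ne_zero j)]
      have hj1 : j + 1 - 1 = j := rfl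
      rw [hj1]
      exact (PTaux.getLastD_take j cs c₀ (by omega)).symm
  have hpay : optPay c₀ σ cs i
      = (if cs.getD i c₀ = (cs.take i).getLastD c₀ then 0 else 1)
        + serveCost (cs.getD i c₀) (σ.getD i (c₀, c₀)) := by
    unfold optPay
    rw [hprev]
  have hPT : (((ptStates tb c₀ σ).getD i ((c₀ : V), ({c₀} : Finset V)))).2
      = PTaux.AF ((σ.take i).foldl PTaux.dpStep (PTaux.F0 c₀)) := by
    unfold ptStates
    rw [PTaux.scanl_getD (ptStep tb) σ i (c₀, {c₀}) _ (le_of_lt hi)]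
    exact PTaux.pt_snd_eq tb (σ.take i) (c₀, {c₀}) (PTaux.F0 c₀) (by simp [PTaux.AF_F0])
  rw [hPT]
  by_cases hI : (PTaux.AF ((σ.take i).foldl PTaux.dpStep (PTaux.F0 c₀))
      ∩ {(σ.getD i (c₀, c₀)).1, (σ.getD i (c₀, c₀)).2}).Nonempty
  · have hg := (PTaux.core_inter _ _ hI).1
    have hpv : optPay c₀ σ cs i = 1 := by
      rw [hpay]
      omega
    refine ⟨⟨fun _ => hpv, fun _ => hI⟩, ⟨fun h => absurd hI h, fun h2 => ?_⟩⟩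
    exact absurd (hpv.symm.trans h2) (by norm_num)
  · have hg := (PTaux.core_union _ _ hI).1
    have hpv : optPay c₀ σ cs i = 2 := by
      rw [hpay]
      omega
    refine ⟨⟨fun h => absurd h hI, fun h1 => ?_⟩, ⟨fun _ => hpv, fun _ => hI⟩⟩
    exact absurd (hpv.symm.trans h1) (by norm_num)
end

section
/- Let σ be a finite request sequence, let S be any minimum-cost schedule for σ, and let P be a phase of S other than the first phase, with pivot x. Then x belongs to at least one request of P. -/
lemma serveCost_le_two {V : Type*} [DecidableEq V] (c : V) (r : V × V) :
    serveCost c r ≤ 2 := by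
  unfold serveCost; split <;> omega

lemma schedCost_eq_sum {V : Type*} [DecidableEq V] :
    ∀ (σ : List (V × V)) (cs : List V) (c₀ d : V) (dp : V × V), cs.length = σ.length →
    schedCost c₀ σ cs = ∑ k ∈ Finset.range σ.length,
      ((if cs.getD k d = (if k = 0 then c₀ else cs.getD (k-1) d) then 0 else 1)
        + serveCost (cs.getD k d) (σ.getD k dp))
  | [], cs, c₀, d, dp, h => by simp [schedCost]
  | r :: σ, [], c₀, d, dp, h => by simp at h
  | r :: σ, c :: cs, c₀, d, dp, h => by
    simp only [List.length_cons] at h ⊢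
    simp only [schedCost]
    rw [schedCost_eq_sum σ cs c d dp (by omega), Finset.sum_range_succ']
    have hsum : (∑ k ∈ Finset.range σ.length,
        ((if cs.getD k d = (if k = 0 then c else cs.getD (k-1) d) then 0 else 1)
          + serveCost (cs.getD k d) (σ.getD k dp)))
        = ∑ k ∈ Finset.range σ.length,
        ((if (c :: cs).getD (k+1) d = (if k+1 = 0 then c₀ else (c :: cs).getD (k+1-1) d) then 0 else 1)
          + serveCost ((c :: cs).getD (k+1) d) ((r :: σ).getD (k+1) dp)) := by
      refine Finset.sum_congr rfl fun k hk => ?_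
      rcases k with _ | k <;> simp
    rw [← hsum]
    conv_rhs => rw [add_comm]
    simp

/-- Let `σ` be a finite request sequence (of unordered pairs
of distinct nodes), let `S = cs` be any minimum-cost schedule for `σ`, and let
`P` be a phase of `S` other than the first phase — a maximal run of requests
`i, …, j` with `i ≥ 1`, all served with the same center `x` (the pivot), with
`cs (i-1) ≠ x` and with either `j + 1 = |σ|` or `cs (j+1) ≠ x`.
Then `x` belongs to at least one request of `P`. -/
theorem minCost_phase_pivot_is_requested
    {V : Type*} [DecidableEq V] [Fintype V] (hn : 3 ≤ Fintype.card V)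
    (c₀ : V) (σ : List (V × V)) (hσ : ∀ r ∈ σ, r.1 ≠ r.2)
    (cs : List V) (hlen : cs.length = σ.length)
    (hopt : schedCost c₀ σ cs = OPT c₀ σ)
    (x : V) (i j : ℕ) (hi1 : 1 ≤ i) (hij : i ≤ j) (hjlen : j < σ.length)
    (hrun : ∀ k, i ≤ k → k ≤ j → cs.getD k c₀ = x)
    (hleft : cs.getD (i - 1) c₀ ≠ x)
    (hright : j + 1 = σ.length ∨ cs.getD (j + 1) c₀ ≠ x) :
    ∃ k, i ≤ k ∧ k ≤ j ∧
      (x = (σ.getD k (c₀, c₀)).1 ∨ x = (σ.getD k (c₀, c₀)).2) := by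
  by_contra hcon
  push_neg at hcon
  obtain ⟨y, hy⟩ : ∃ y, cs.getD (i-1) c₀ = y := ⟨_, rfl⟩
  rw [hy] at hleft
  obtain ⟨cs', hcs'⟩ : ∃ l : List V,
      l = (List.range σ.length).map (fun k => if i ≤ k ∧ k ≤ j then y else cs.getD k c₀) :=
    ⟨_, rfl⟩
  have hlen' : cs'.length = σ.length := by simp [hcs']
  have hget : ∀ k, k < σ.length →
      cs'.getD k c₀ = if i ≤ k ∧ k ≤ j then y else cs.getD k c₀ := by
    intro k hk
    rw [hcs', List.getD_eq_getElem _ _ (by simpa using hk)]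
    simp
  have hserve : ∀ k, i ≤ k → k ≤ j → serveCost x (σ.getD k (c₀,c₀)) = 2 := by
    intro k h1 h2
    have h := hcon k h1 h2
    unfold serveCost
    rw [if_neg]
    push_neg
    exact h
  have hlt : schedCost c₀ σ cs' < schedCost c₀ σ cs := by
    rw [schedCost_eq_sum σ cs c₀ c₀ (c₀,c₀) hlen,
        schedCost_eq_sum σ cs' c₀ c₀ (c₀,c₀) hlen']
    apply Finset.sum_lt_sum
    · intro k hk
      simp only [Finset.mem_range] at hk
      rcases Nat.lt_or_ge k i with hki | hki
      · -- k < i : terms equal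
        have e1 : cs'.getD k c₀ = cs.getD k c₀ := by
          rw [hget k hk]; exact if_neg (by omega)
        rcases Nat.eq_zero_or_pos k with rfl | hk0
        · rw [if_pos rfl, if_pos rfl, e1]
        · have hk0' : ¬ k = 0 := by omega
          have e2 : cs'.getD (k-1) c₀ = cs.getD (k-1) c₀ := by
            rw [hget (k-1) (by omega)]; exact if_neg (by omega)
          rw [if_neg hk0', if_neg hk0', e1, e2]
      rcases le_or_gt k j with hkj | hkj
      · -- i ≤ k ≤ j
        have hk0' : ¬ k = 0 := by omega
        have e1 : cs'.getD k c₀ = y := by rw [hget k hk]; exact if_pos ⟨hki, hkj⟩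
        have eprev : cs'.getD (k-1) c₀ = y := by
          rw [hget (k-1) (by omega)]
          rcases Nat.eq_or_lt_of_le hki with heq | hik
          · rw [if_neg (by omega), show k - 1 = i - 1 by omega, hy]
          · exact if_pos (by omega)
        have eold : cs.getD k c₀ = x := hrun k hki hkj
        rw [if_neg hk0', if_neg hk0', e1, eprev, eold, hserve k hki hkj, if_pos rfl]
        have h2 := serveCost_le_two y (σ.getD k (c₀,c₀))
        split <;> omega
      rcases Nat.eq_or_lt_of_le (show j + 1 ≤ k by omega) with rfl | hjk
      · -- k = j + 1
        have hk0' : ¬ j + 1 = 0 := by omega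
        have e1 : cs'.getD (j+1) c₀ = cs.getD (j+1) c₀ := by
          rw [hget _ hk]; exact if_neg (by omega)
        have eprev : cs'.getD (j+1-1) c₀ = y := by
          rw [hget (j+1-1) (by omega)]
          exact if_pos ⟨by omega, by omega⟩
        have eoldprev : cs.getD (j+1-1) c₀ = x := hrun (j+1-1) (by omega) (by omega)
        have hne : cs.getD (j+1) c₀ ≠ x := by
          rcases hright with h | h
          · omega
          · exact h
        rw [if_neg hk0', if_neg hk0', e1, eprev, eoldprev, if_neg hne]
        split <;> omega
      · -- k > j + 1
        have hk0' : ¬ k = 0 := by omega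
        have e1 : cs'.getD k c₀ = cs.getD k c₀ := by
          rw [hget k hk]; exact if_neg (by omega)
        have e2 : cs'.getD (k-1) c₀ = cs.getD (k-1) c₀ := by
          rw [hget (k-1) (by omega)]; exact if_neg (by omega)
        rw [if_neg hk0', if_neg hk0', e1, e2]
    · refine ⟨i, Finset.mem_range.mpr (by omega), ?_⟩
      have hi0 : ¬ i = 0 := by omega
      have e1 : cs'.getD i c₀ = y := by
        rw [hget i (by omega)]; exact if_pos ⟨le_refl _, hij⟩
      have eprev : cs'.getD (i-1) c₀ = y := by
        rw [hget (i-1) (by omega), ← hy]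
        exact if_neg (by omega)
      have eold : cs.getD i c₀ = x := hrun i (le_refl _) hij
      have holdprev : cs.getD i c₀ ≠ cs.getD (i-1) c₀ := by
        rw [eold, hy]; exact fun h => hleft h.symm
      rw [if_neg hi0, if_neg hi0, if_neg holdprev, e1, eprev, eold,
          hserve i (le_refl _) hij, if_pos rfl]
      have h2 := serveCost_le_two y (σ.getD i (c₀,c₀))
      omega
  have hle : OPT c₀ σ ≤ schedCost c₀ σ cs' := Nat.sInf_le ⟨cs', hlen', rfl⟩
  omega
end
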